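/- If 0 < c < c* (so that μ = 1/(1−cM) > 0), then E₁ = ∫₁^X f(z;μ,λ,−1/2) dz; and if c > c* (so that μ̃ = 1/(cM−1) > 0), then E₁ = exp(−2λ/μ̃) · ∫₁^X f(z;μ̃,λ,−1/2) dz. -/

import Mathlib

open MeasureTheory Real

/-- P.d.f. of the normal distribution with mean `m` and variance `s2`. -/
noncomputable def normalPdf (m s2 x : ℝ) : ℝ :=
  (Real.sqrt (2 * Real.pi * s2))⁻¹ * Real.exp (-(x - m) ^ 2 / (2 * s2))

/-- The elementary component
`E_k = ∫₀^{c(t−v)/(u+cv)} (1+x)^{−k} φ_{cM(1+x), c²D²(1+x)/(u+cv)}(x) dx`. -/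
noncomputable def elemComp (u c v t M D : ℝ) (k : ℕ) : ℝ :=
  ∫ x in (0:ℝ)..(c * (t - v) / (u + c * v)),
    ((1 + x) ^ k)⁻¹ *
      normalPdf (c * M * (1 + x)) (c ^ 2 * D ^ 2 * (1 + x) / (u + c * v)) x

/-- The exponential factor `E(z; μ, λ) = exp(−λ(z−μ)²/(2μ²z))`. -/
noncomputable def gigE (z μ lam : ℝ) : ℝ :=
  Real.exp (-(lam * (z - μ) ^ 2) / (2 * μ ^ 2 * z))

/-- Generalized inverse Gaussian density with `p = 1/2`. -/
noncomputable def gigPdfHalf (μ lam z : ℝ) : ℝ :=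
  Real.sqrt lam / (μ * Real.sqrt (2 * Real.pi)) * z ^ (-(1:ℝ)/2) * gigE z μ lam

/-- Generalized inverse Gaussian density with `p = −1/2`. -/
noncomputable def gigPdfNegHalf (μ lam z : ℝ) : ℝ :=
  Real.sqrt lam / Real.sqrt (2 * Real.pi) * z ^ (-(3:ℝ)/2) * gigE z μ lam

/-- Generalized inverse Gaussian density with `p = −3/2`. -/
noncomputable def gigPdfNeg3Half (μ lam z : ℝ) : ℝ :=
  lam ^ ((3:ℝ)/2) * μ / (Real.sqrt (2 * Real.pi) * (lam + μ)) * z ^ (-(5:ℝ)/2) * gigE z μ lam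

/-- Generalized inverse Gaussian density with `p = −5/2`. -/
noncomputable def gigPdfNeg5Half (μ lam z : ℝ) : ℝ :=
  lam ^ ((5:ℝ)/2) * μ ^ 2 / (Real.sqrt (2 * Real.pi) * (lam ^ 2 + 3 * lam * μ + 3 * μ ^ 2))
    * z ^ (-(7:ℝ)/2) * gigE z μ lam

lemma rpow_neg_three_halves {z : ℝ} (hz : 0 < z) :
    z ^ (-(3:ℝ)/2) = (z * Real.sqrt z)⁻¹ := by
  rw [show (-(3:ℝ)/2) = -(1 + 1/2) by norm_num, Real.rpow_neg hz.le,
    Real.rpow_add hz, Real.rpow_one, ← Real.sqrt_eq_rpow]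

lemma prefactor (s cd z : ℝ) (hs : 0 < s) (hcd : 0 < cd) (hz : 0 < z) :
    z⁻¹ * (Real.sqrt (2 * Real.pi * (cd * z / s)))⁻¹
      = Real.sqrt (s / cd) / Real.sqrt (2 * Real.pi) * z ^ (-(3:ℝ)/2) := by
  rw [rpow_neg_three_halves hz,
    show 2 * Real.pi * (cd * z / s) = (2 * Real.pi) * (cd / s) * z by ring,
    Real.sqrt_mul (by positivity), Real.sqrt_mul (by positivity),
    Real.sqrt_div (by positivity : (0:ℝ) ≤ cd),
    Real.sqrt_div (by positivity : (0:ℝ) ≤ s)]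
  have h1 : (0:ℝ) < Real.sqrt (2 * Real.pi) := by positivity
  have h2 : (0:ℝ) < Real.sqrt cd := Real.sqrt_pos.2 hcd
  have h3 : (0:ℝ) < Real.sqrt s := Real.sqrt_pos.2 hs
  have h4 : (0:ℝ) < Real.sqrt z := Real.sqrt_pos.2 hz
  field_simp

lemma elemComp_case1 (c M D s x : ℝ) (hc : 0 < c) (hD : 0 < D) (hs : 0 < s) (hx : 0 ≤ x)
    (h : c * M < 1) :
    ((1 + x) ^ 1)⁻¹ * normalPdf (c * M * (1 + x)) (c ^ 2 * D ^ 2 * (1 + x) / s) x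
      = gigPdfNegHalf (1 / (1 - c * M)) (s / (c ^ 2 * D ^ 2)) (1 + x) := by
  have hz : (0:ℝ) < 1 + x := by linarith
  have hcm : (0:ℝ) < 1 - c * M := by linarith
  have hcd : (0:ℝ) < c ^ 2 * D ^ 2 := by positivity
  unfold normalPdf gigPdfNegHalf gigE
  have hpre := prefactor s (c ^ 2 * D ^ 2) (1 + x) hs hcd hz
  have hexp : -(x - c * M * (1 + x)) ^ 2 / (2 * (c ^ 2 * D ^ 2 * (1 + x) / s))
      = -((s / (c ^ 2 * D ^ 2)) * ((1 + x) - 1 / (1 - c * M)) ^ 2)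
          / (2 * (1 / (1 - c * M)) ^ 2 * (1 + x)) := by
    rw [div_eq_div_iff (by positivity) (by positivity)]
    field_simp
    ring
  rw [pow_one, hexp, ← hpre]
  ring

lemma elemComp_case2 (c M D s x : ℝ) (hc : 0 < c) (hD : 0 < D) (hs : 0 < s) (hx : 0 ≤ x)
    (h : 1 < c * M) :
    ((1 + x) ^ 1)⁻¹ * normalPdf (c * M * (1 + x)) (c ^ 2 * D ^ 2 * (1 + x) / s) x
      = Real.exp (-2 * (s / (c ^ 2 * D ^ 2)) / (1 / (c * M - 1))) *
          gigPdfNegHalf (1 / (c * M - 1)) (s / (c ^ 2 * D ^ 2)) (1 + x) := by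
  have hz : (0:ℝ) < 1 + x := by linarith
  have hcm : (0:ℝ) < c * M - 1 := by linarith
  have hcd : (0:ℝ) < c ^ 2 * D ^ 2 := by positivity
  unfold normalPdf gigPdfNegHalf gigE
  have hpre := prefactor s (c ^ 2 * D ^ 2) (1 + x) hs hcd hz
  have hexp : Real.exp (-(x - c * M * (1 + x)) ^ 2 / (2 * (c ^ 2 * D ^ 2 * (1 + x) / s)))
      = Real.exp (-2 * (s / (c ^ 2 * D ^ 2)) / (1 / (c * M - 1))) *
        Real.exp (-((s / (c ^ 2 * D ^ 2)) * ((1 + x) - 1 / (c * M - 1)) ^ 2)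
          / (2 * (1 / (c * M - 1)) ^ 2 * (1 + x))) := by
    rw [← Real.exp_add]
    congr 1
    field_simp
    ring
  rw [pow_one, hexp, ← hpre]
  ring

/-- Theorem on `E₁` in terms of the inverse Gaussian c.d.f. (`p = −1/2`). -/
theorem elemComp_one_eq (u c v t M D : ℝ)
    (hu : 0 < u) (hc : 0 < c) (hv : 0 ≤ v) (ht : v < t) (hM : 0 < M) (hD : 0 < D) :
    (c < 1 / M →
      elemComp u c v t M D 1
        = ∫ z in (1:ℝ)..(c * (t - v) / (u + c * v) + 1),
            gigPdfNegHalf (1 / (1 - c * M)) ((u + c * v) / (c ^ 2 * D ^ 2)) z)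
    ∧ (1 / M < c →
      elemComp u c v t M D 1
        = Real.exp (-2 * ((u + c * v) / (c ^ 2 * D ^ 2)) / (1 / (c * M - 1))) *
            ∫ z in (1:ℝ)..(c * (t - v) / (u + c * v) + 1),
              gigPdfNegHalf (1 / (c * M - 1)) ((u + c * v) / (c ^ 2 * D ^ 2)) z) := by
  have hs : 0 < u + c * v := by positivity
  have hL : 0 < c * (t - v) / (u + c * v) :=
    div_pos (mul_pos hc (sub_pos.2 ht)) hs
  constructor
  · intro hcc
    have h : c * M < 1 := by
      rw [lt_div_iff₀ hM] at hcc; exact hcc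
    have hcong : elemComp u c v t M D 1
        = ∫ x in (0:ℝ)..(c * (t - v) / (u + c * v)),
            gigPdfNegHalf (1 / (1 - c * M)) ((u + c * v) / (c ^ 2 * D ^ 2)) (x + 1) := by
      unfold elemComp
      apply intervalIntegral.integral_congr
      intro x hx
      rw [Set.uIcc_of_le hL.le] at hx
      show ((1 + x) ^ 1)⁻¹ * _ = gigPdfNegHalf _ _ (x + 1)
      rw [show x + 1 = 1 + x by ring]
      exact elemComp_case1 c M D (u + c * v) x hc hD hs hx.1 h
    rw [hcong]
    simpa using intervalIntegral.integral_comp_add_right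
      (fun z => gigPdfNegHalf (1 / (1 - c * M)) ((u + c * v) / (c ^ 2 * D ^ 2)) z) 1
      (a := 0) (b := c * (t - v) / (u + c * v))
  · intro hcc
    have h : 1 < c * M := by
      rw [div_lt_iff₀ hM] at hcc; exact hcc
    have hcong : elemComp u c v t M D 1
        = ∫ x in (0:ℝ)..(c * (t - v) / (u + c * v)),
            Real.exp (-2 * ((u + c * v) / (c ^ 2 * D ^ 2)) / (1 / (c * M - 1))) *
              gigPdfNegHalf (1 / (c * M - 1)) ((u + c * v) / (c ^ 2 * D ^ 2)) (x + 1) := by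
      unfold elemComp
      apply intervalIntegral.integral_congr
      intro x hx
      rw [Set.uIcc_of_le hL.le] at hx
      show ((1 + x) ^ 1)⁻¹ * _ = _ * gigPdfNegHalf _ _ (x + 1)
      rw [show x + 1 = 1 + x by ring]
      exact elemComp_case2 c M D (u + c * v) x hc hD hs hx.1 h
    rw [hcong, intervalIntegral.integral_const_mul]
    congr 1
    simpa using intervalIntegral.integral_comp_add_right
      (fun z => gigPdfNegHalf (1 / (c * M - 1)) ((u + c * v) / (c ^ 2 * D ^ 2)) z) 1
      (a := 0) (b := c * (t - v) / (u + c * v))
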